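/- Let x = [[0,−1],[1,−1]] and y = α·[[0,1/2],[1,−1]] in SL₂(ℤ₃), let t = y·x·y·x⁻¹·y, and let c = [[−1,1],[0,1]] ∈ GL₂(ℤ₃). Then: (a) x³ = 1; (b) c·x·c⁻¹ = x⁻¹; (c) c·y·c⁻¹ = y⁻¹; and (d) c·t·c⁻¹ = t. (These verify that the map sending the generators of the pro-3 group H = ⟨x, y | x³, t⁻¹σ(t)⟩ to these matrices respects the relators, where σ inverts both generators.) -/

import Mathlib

open Matrix MatrixGroups

/-- With `x = [[0,-1],[1,-1]]` and `y = α·[[0,1/2],[1,-1]]` in `SL₂(ℤ₃)`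
(where `α² = -2`, `α ≡ 1 mod 3`, and `h = 1/2`), `t = y·x·y·x⁻¹·y`, and
`c = [[-1,1],[0,1]] ∈ GL₂(ℤ₃)`, we have `x³ = 1`, `c·x·c⁻¹ = x⁻¹`, `c·y·c⁻¹ = y⁻¹`
and `c·t·c⁻¹ = t`. -/
theorem stmt_0 (α h : ℤ_[3]) (hα2 : α ^ 2 = -2) (hα1 : (3 : ℤ_[3]) ∣ (α - 1))
    (hh : 2 * h = 1)
    (x y t : SL(2, ℤ_[3]))
    (hx : (x : Matrix (Fin 2) (Fin 2) ℤ_[3]) = !![0, -1; 1, -1])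
    (hy : (y : Matrix (Fin 2) (Fin 2) ℤ_[3]) = α • !![0, h; 1, -1])
    (ht : t = y * x * y * x⁻¹ * y)
    (c : GL (Fin 2) ℤ_[3])
    (hc : (c : Matrix (Fin 2) (Fin 2) ℤ_[3]) = !![-1, 1; 0, 1]) :
    x ^ 3 = 1 ∧
    c * (x : GL (Fin 2) ℤ_[3]) * c⁻¹ = ((x⁻¹ : SL(2, ℤ_[3])) : GL (Fin 2) ℤ_[3]) ∧
    c * (y : GL (Fin 2) ℤ_[3]) * c⁻¹ = ((y⁻¹ : SL(2, ℤ_[3])) : GL (Fin 2) ℤ_[3]) ∧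
    c * (t : GL (Fin 2) ℤ_[3]) * c⁻¹ = (t : GL (Fin 2) ℤ_[3]) := by
  have hval : ∀ A : SL(2, ℤ_[3]),
      ((A : GL (Fin 2) ℤ_[3]) : Matrix (Fin 2) (Fin 2) ℤ_[3])
        = (A : Matrix (Fin 2) (Fin 2) ℤ_[3]) := fun _ => rfl
  have hxinv : ((x⁻¹ : SL(2, ℤ_[3])) : Matrix (Fin 2) (Fin 2) ℤ_[3]) = !![-1, 1; -1, 0] := by
    rw [Matrix.SpecialLinearGroup.coe_inv, hx, adjugate_fin_two]
    norm_num
  have hy' : (y : Matrix (Fin 2) (Fin 2) ℤ_[3]) = !![0, α * h; α, -α] := by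
    rw [hy]
    ext i j
    fin_cases i <;> fin_cases j <;> simp
  have hyinv : ((y⁻¹ : SL(2, ℤ_[3])) : Matrix (Fin 2) (Fin 2) ℤ_[3]) = !![-α, -(α * h); -α, 0] := by
    rw [Matrix.SpecialLinearGroup.coe_inv, hy', adjugate_fin_two]
    norm_num
  have hcinv : c⁻¹ = c := by
    rw [inv_eq_iff_mul_eq_one]
    ext : 1
    rw [Units.val_mul, hc, Units.val_one, mul_fin_two, one_fin_two]
    norm_num
  have h1 : x ^ 3 = 1 := by
    ext : 1
    rw [pow_succ, pow_succ, pow_one, Matrix.SpecialLinearGroup.coe_mul,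
      Matrix.SpecialLinearGroup.coe_mul, hx, Matrix.SpecialLinearGroup.coe_one, mul_fin_two, mul_fin_two,
      one_fin_two]
    norm_num
  have htm : (t : Matrix (Fin 2) (Fin 2) ℤ_[3])
      = !![0, α * h; α, -α] * !![0, -1; 1, -1] * !![0, α * h; α, -α] * !![-1, 1; -1, 0] *
          !![0, α * h; α, -α] := by
    rw [ht]
    simp only [Matrix.SpecialLinearGroup.coe_mul, hx, hy', hxinv]
  refine ⟨h1, ?_, ?_, ?_⟩
  · rw [hcinv]
    ext : 1
    rw [Units.val_mul, Units.val_mul, hc, hval x, hval x⁻¹, hx, hxinv, mul_fin_two, mul_fin_two]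
    norm_num
  · rw [hcinv]
    ext : 1
    rw [Units.val_mul, Units.val_mul, hc, hval y, hval y⁻¹, hy', hyinv, mul_fin_two, mul_fin_two]
    ext i j
    fin_cases i <;> fin_cases j <;> · simp; try linear_combination (h - 1) * hα2 + (α ^ 2 + 1) * hh
  · rw [hcinv]
    ext : 1
    rw [Units.val_mul, Units.val_mul, hc, hval t, htm,
      mul_fin_two, mul_fin_two, mul_fin_two, mul_fin_two, mul_fin_two, mul_fin_two]
    ext i j
    fin_cases i <;> fin_cases j <;> simp <;>
      linear_combination (α ^ 3 * h * (h + 1)) * hh
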